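/- As α → 0⁺, the function a_{it} = Φ₃(1; 1/2; it(α/2)², (iβt/2)²) satisfies a_{it} = cos(βt) + (2i/β)(α/2)² sin(βt) + O(α⁴), uniformly for t in compact subsets of (0,∞), for fixed β > 0. -/

import Mathlib

/-- The Humbert confluent hypergeometric function `Φ₃(a;b;x,y)`. -/
noncomputable def humbertPhi3 (a b x y : ℂ) : ℂ :=
  ∑' p : ℕ × ℕ,
    (Polynomial.eval a (ascPochhammer ℂ p.1) /
        Polynomial.eval b (ascPochhammer ℂ (p.1 + p.2))) *
      (x ^ p.1 / (p.1.factorial : ℂ)) * (y ^ p.2 / (p.2.factorial : ℂ))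

open Polynomial Nat

set_option maxHeartbeats 1000000

lemma pochHalf_mul (j : ℕ) :
    ((4 : ℂ) ^ j * (j ! : ℂ)) * (ascPochhammer ℂ j).eval (1/2 : ℂ) = ((2*j)! : ℂ) := by
  induction j with
  | zero => simp
  | succ j ih =>
    rw [ascPochhammer_succ_eval]
    have h : (2*(j+1))! = (2*j+2) * ((2*j+1) * (2*j)!) := by
      rw [show 2*(j+1) = (2*j+1)+1 by ring, Nat.factorial_succ, Nat.factorial_succ]
    rw [h]
    push_cast [Nat.factorial_succ]
    linear_combination (4 * ((1:ℂ)/2 + j) * (j+1)) * ih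

lemma pochHalf_eq (j : ℕ) :
    (ascPochhammer ℂ j).eval (1/2 : ℂ) = (((2*j)! / (4 ^ j * j !) : ℝ) : ℂ) := by
  have h4 : ((4:ℂ)^j * (j ! : ℂ)) ≠ 0 :=
    mul_ne_zero (pow_ne_zero _ (by norm_num)) (Nat.cast_ne_zero.mpr (Nat.factorial_ne_zero _))
  push_cast
  rw [eq_div_iff h4]
  linear_combination pochHalf_mul j

lemma pochHalf_pos (j : ℕ) : (0:ℝ) < (2*j)! / (4 ^ j * j !) := by positivity

lemma norm_pochHalf (j : ℕ) :
    ‖(ascPochhammer ℂ j).eval (1/2 : ℂ)‖ = (2*j)! / (4 ^ j * j !) := by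
  rw [pochHalf_eq, Complex.norm_real, Real.norm_eq_abs, abs_of_pos (pochHalf_pos j)]

lemma key_ineq (m n : ℕ) :
    (1:ℝ) / ((2*(m+n))! / (4 ^ (m+n) * (m+n)!) * n !) ≤ 4^(m+n) / (m ! * n !) := by
  have h1 : (m ! * (m+n)! : ℕ) ≤ (2*(m+n))! := by
    calc m ! * (m+n)! ≤ (m+n)! * (m+n)! :=
          Nat.mul_le_mul_right _ (Nat.factorial_le (Nat.le_add_right m n))
      _ ≤ (2*(m+n))! := Nat.le_of_dvd (Nat.factorial_pos _)
          (by rw [two_mul]; exact Nat.factorial_mul_factorial_dvd_factorial_add _ _)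
  have h1' : ((m ! : ℝ) * (m+n)!) ≤ (2*(m+n))! := by exact_mod_cast h1
  have e : (1:ℝ) / ((2*(m+n))! / (4 ^ (m+n) * (m+n)!) * n !)
      = 4^(m+n) * (m+n)! / ((2*(m+n))! * n !) := by
    have hA : ((2*(m+n))! : ℝ) ≠ 0 := by positivity
    have hn : ((n ! : ℝ)) ≠ 0 := by positivity
    have hm : (((m+n)! : ℝ)) ≠ 0 := by positivity
    field_simp
  rw [e, div_le_div_iff₀ (by positivity) (by positivity)]
  nlinarith [mul_le_mul_of_nonneg_left h1'
    (show (0:ℝ) ≤ 4^(m+n) * (n !) from by positivity)]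


lemma term_eq (x y : ℂ) (m n : ℕ) :
    ((ascPochhammer ℂ m).eval 1 / (ascPochhammer ℂ (m+n)).eval (1/2 : ℂ)) *
      (x ^ m / (m ! : ℂ)) * (y ^ n / (n ! : ℂ))
    = x ^ m * y ^ n / ((ascPochhammer ℂ (m+n)).eval (1/2 : ℂ) * (n ! : ℂ)) := by
  have hg : (ascPochhammer ℂ (m+n)).eval (1/2 : ℂ) ≠ 0 := by
    rw [pochHalf_eq]
    exact_mod_cast ne_of_gt (by positivity : (0:ℝ) < (2*(m+n))! / (4 ^ (m+n) * (m+n)!))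
  have hm : ((m ! : ℂ)) ≠ 0 := Nat.cast_ne_zero.mpr (Nat.factorial_ne_zero _)
  have hn : ((n ! : ℂ)) ≠ 0 := Nat.cast_ne_zero.mpr (Nat.factorial_ne_zero _)
  rw [ascPochhammer_eval_one]
  field_simp

lemma rowZero (z : ℂ) :
    ∑' n : ℕ, ((Complex.I * z / 2) ^ 2) ^ n /
        ((ascPochhammer ℂ n).eval (1/2 : ℂ) * (n ! : ℂ)) = Complex.cos z := by
  rw [Complex.cos_eq_tsum]
  refine tsum_congr fun n => ?_
  have hsq : (Complex.I * z / 2) ^ 2 = -(z ^ 2 / 4) := by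
    linear_combination (z^2/4) * Complex.I_sq
  rw [hsq, pochHalf_eq, neg_pow, div_pow]
  have h2 : ((2*n)! : ℂ) ≠ 0 := Nat.cast_ne_zero.mpr (Nat.factorial_ne_zero _)
  have hn : ((n ! : ℂ)) ≠ 0 := Nat.cast_ne_zero.mpr (Nat.factorial_ne_zero _)
  have h4 : ((4:ℂ)) ≠ 0 := by norm_num
  push_cast
  rw [← pow_mul]
  field_simp

lemma rowOne (z : ℂ) (hz : z ≠ 0) :
    ∑' n : ℕ, ((Complex.I * z / 2) ^ 2) ^ n /
        ((ascPochhammer ℂ (1+n)).eval (1/2 : ℂ) * (n ! : ℂ))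
      = 2 / z * Complex.sin z := by
  have key : ∀ n : ℕ, ((Complex.I * z / 2) ^ 2) ^ n /
        ((ascPochhammer ℂ (1+n)).eval (1/2 : ℂ) * (n ! : ℂ))
      = (2 / z) * ((-1) ^ n * z ^ (2*n+1) / ((2*n+1)! : ℂ)) := by
    intro n
    have hsq : (Complex.I * z / 2) ^ 2 = -(z ^ 2 / 4) := by
      linear_combination (z^2/4) * Complex.I_sq
    rw [hsq, pochHalf_eq, neg_pow, div_pow]
    have hfact : (2*(1+n))! = (2*n+2) * (2*n+1)! := by
      rw [show 2*(1+n) = (2*n+1)+1 by ring, Nat.factorial_succ]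
    rw [hfact]
    have h2 : ((2*n+1)! : ℂ) ≠ 0 := Nat.cast_ne_zero.mpr (Nat.factorial_ne_zero _)
    have hn : ((n ! : ℂ)) ≠ 0 := Nat.cast_ne_zero.mpr (Nat.factorial_ne_zero _)
    have hn1 : (((1+n)! : ℂ)) ≠ 0 := Nat.cast_ne_zero.mpr (Nat.factorial_ne_zero _)
    have hfa : ((1+n)! : ℂ) = (n+1) * (n ! : ℂ) := by
      rw [show 1+n = n+1 by ring]; push_cast [Nat.factorial_succ]; ring
    push_cast [hfa]
    rw [← pow_mul]
    have hn2 : ((2:ℂ)*n+2) ≠ 0 := by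
      have h : ((2:ℝ)*n+2) ≠ 0 := by positivity
      exact_mod_cast h
    field_simp
    ring
  rw [tsum_congr key, tsum_mul_left, ← Complex.sin_eq_tsum]

lemma norm_term_le (x y : ℂ) (m n : ℕ) :
    ‖x ^ m * y ^ n / ((ascPochhammer ℂ (m+n)).eval (1/2 : ℂ) * (n ! : ℂ))‖
      ≤ (4*‖x‖) ^ m / (m !) * ((4*‖y‖) ^ n / (n !)) := by
  have hkey := key_ineq m n
  rw [norm_div, norm_mul, norm_mul, norm_pow, norm_pow, norm_pochHalf,
    Complex.norm_natCast]
  calc ‖x‖ ^ m * ‖y‖ ^ n / ((2*(m+n))! / (4 ^ (m+n) * (m+n)!) * (n !))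
      = ‖x‖ ^ m * ‖y‖ ^ n * ((1:ℝ) / ((2*(m+n))! / (4 ^ (m+n) * (m+n)!) * (n !))) := by
        ring
    _ ≤ ‖x‖ ^ m * ‖y‖ ^ n * (4^(m+n) / ((m !) * (n !))) := by
        gcongr
    _ = (4*‖x‖) ^ m / (m !) * ((4*‖y‖) ^ n / (n !)) := by
        rw [mul_pow, mul_pow, pow_add]; ring

/-- As `α → 0⁺`, the function `a_{it} = Φ₃(1; 1/2; it(α/2)², (iβt/2)²)` satisfies
`a_{it} = cos(βt) + (2i/β)(α/2)² sin(βt) + O(α⁴)`, uniformly for `t` in compact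
subsets of `(0,∞)`, for fixed `β > 0`. -/
theorem humbertPhi3_expansion_small_alpha (β : ℝ) (hβ : 0 < β) :
    ∀ K : Set ℝ, K ⊆ Set.Ioi 0 → IsCompact K →
      ∃ C > (0 : ℝ), ∃ δ > (0 : ℝ), ∀ α : ℝ, 0 < α → α < δ → ∀ t ∈ K,
        ‖humbertPhi3 1 (1 / 2) (Complex.I * t * ((α : ℂ) / 2) ^ 2)
              ((Complex.I * β * t / 2) ^ 2) -
            (Complex.cos (β * t) +
              (2 * Complex.I / β) * ((α : ℂ) / 2) ^ 2 * Complex.sin (β * t))‖ ≤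
          C * α ^ 4 := by
  intro K hK hKc
  rcases K.eq_empty_or_nonempty with hKe | hKe
  · exact ⟨1, one_pos, 1, one_pos, fun α _ _ t ht => by simp [hKe] at ht⟩
  obtain ⟨T, hTK, hTub⟩ := hKc.exists_isGreatest hKe
  have hT0 : 0 < T := hK hTK
  set EY : ℝ := ∑' n : ℕ, ((β*T)^2)^n / (n !) with hEYdef
  set ET : ℝ := ∑' m : ℕ, T^m / (m !) with hETdef
  have hEY0 : 0 ≤ EY := tsum_nonneg fun n => by positivity
  have hET0 : 0 ≤ ET := tsum_nonneg fun m => by positivity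
  refine ⟨T^2 * EY * ET + 1, by positivity, 1, one_pos, fun α hα hα1 t ht => ?_⟩
  have ht0 : 0 < t := hK ht
  have htT : t ≤ T := hTub ht
  set x : ℂ := Complex.I * t * ((α : ℂ) / 2) ^ 2 with hxdef
  set y : ℂ := (Complex.I * β * t / 2) ^ 2 with hydef
  have hx : ‖x‖ = t * α^2 / 4 := by
    rw [hxdef]
    rw [norm_mul, norm_mul, Complex.norm_I, norm_pow, norm_div]
    simp [Complex.norm_real, abs_of_pos ht0, abs_of_pos hα]
    ring
  have hy : ‖y‖ = (β*t)^2 / 4 := by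
    rw [hydef, norm_pow, norm_div, norm_mul, norm_mul, Complex.norm_I]
    simp [Complex.norm_real, abs_of_pos (mul_pos hβ ht0), abs_of_pos hβ, abs_of_pos ht0]
    ring
  -- the normalized term
  set G : ℕ × ℕ → ℂ := fun p =>
    x ^ p.1 * y ^ p.2 / ((ascPochhammer ℂ (p.1 + p.2)).eval (1/2 : ℂ) * ((p.2)! : ℂ))
    with hGdef
  have hBsum : Summable (fun p : ℕ × ℕ =>
      (4*‖x‖) ^ p.1 / ((p.1)!) * ((4*‖y‖) ^ p.2 / ((p.2)!))) :=
    Summable.mul_of_nonneg (Real.summable_pow_div_factorial _)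
      (Real.summable_pow_div_factorial _) (fun m => by positivity) (fun n => by positivity)
  have hGnorm : ∀ p : ℕ × ℕ, ‖G p‖ ≤ (4*‖x‖) ^ p.1 / ((p.1)!) * ((4*‖y‖) ^ p.2 / ((p.2)!)) :=
    fun p => norm_term_le x y p.1 p.2
  have hGsum : Summable G := Summable.of_norm_bounded hBsum hGnorm
  have hPhi : humbertPhi3 1 (1/2) x y = ∑' p : ℕ × ℕ, G p :=
    tsum_congr fun p => term_eq x y p.1 p.2
  set F : ℕ → ℂ := fun m => ∑' n : ℕ, G (m, n) with hFdef
  have hFsum : Summable F := hGsum.prod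
  have hsplit : ∑' p : ℕ × ℕ, G p = F 0 + (F 1 + ∑' m : ℕ, F (m + 1 + 1)) := by
    rw [Summable.tsum_prod' hGsum (fun m => hGsum.prod_factor m)]
    rw [Summable.tsum_eq_zero_add hFsum, Summable.tsum_eq_zero_add ((summable_nat_add_iff 1).2 hFsum)]
  have hw : (Complex.I * β * t / 2) ^ 2 = (Complex.I * ((β:ℂ) * t) / 2) ^ 2 := by ring
  have hF0 : F 0 = Complex.cos ((β:ℂ) * t) := by
    show (∑' n : ℕ, G (0, n)) = _
    have : ∀ n : ℕ, G (0, n) = ((Complex.I * ((β:ℂ)*t) / 2) ^ 2) ^ n /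
        ((ascPochhammer ℂ n).eval (1/2 : ℂ) * ((n)! : ℂ)) := by
      intro n
      simp only [hGdef, hydef, pow_zero, one_mul]
      rw [hw]
      norm_num
    rw [tsum_congr this, rowZero]
  have hwne : ((β:ℂ) * t) ≠ 0 := by
    have : (β * t : ℝ) ≠ 0 := ne_of_gt (mul_pos hβ ht0)
    exact_mod_cast this
  have hF1 : F 1 = (2 * Complex.I / β) * ((α : ℂ) / 2) ^ 2 * Complex.sin ((β:ℂ) * t) := by
    show (∑' n : ℕ, G (1, n)) = _
    have : ∀ n : ℕ, G (1, n) = x * (((Complex.I * ((β:ℂ)*t) / 2) ^ 2) ^ n /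
        ((ascPochhammer ℂ (1 + n)).eval (1/2 : ℂ) * ((n)! : ℂ))) := by
      intro n
      simp only [hGdef, hydef, pow_one]
      rw [hw]
      ring
    rw [tsum_congr this, tsum_mul_left, rowOne _ hwne]
    rw [hxdef]
    have htne : ((t:ℂ)) ≠ 0 := by exact_mod_cast ne_of_gt ht0
    have hbne : ((β:ℂ)) ≠ 0 := by exact_mod_cast ne_of_gt hβ
    field_simp
  -- the remainder
  have hrem : humbertPhi3 1 (1/2) x y -
      (Complex.cos ((β:ℂ) * t) +
        (2 * Complex.I / β) * ((α : ℂ) / 2) ^ 2 * Complex.sin ((β:ℂ) * t))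
      = ∑' m : ℕ, F (m + 1 + 1) := by
    rw [hPhi, hsplit, hF0, hF1]; ring
  rw [hrem]
  -- norm bounds
  set E : ℝ := ∑' n : ℕ, (4*‖y‖) ^ n / (n !) with hEdef
  have hE0 : 0 ≤ E := tsum_nonneg fun n => by positivity
  have hFnorm : ∀ m : ℕ, ‖F m‖ ≤ (4*‖x‖) ^ m / (m !) * E := by
    intro m
    have h2 : Summable (fun n : ℕ => (4*‖x‖) ^ m / ((m !:ℝ)) * ((4*‖y‖) ^ n / (n !))) :=
      (Real.summable_pow_div_factorial (4*‖y‖)).mul_left ((4*‖x‖) ^ m / ((m !:ℝ)))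
    have h1 : Summable fun n : ℕ => ‖G (m, n)‖ :=
      Summable.of_nonneg_of_le (fun n => norm_nonneg _) (fun n => hGnorm (m, n)) h2
    calc ‖F m‖ ≤ ∑' n : ℕ, ‖G (m, n)‖ := norm_tsum_le_tsum_norm h1
      _ ≤ ∑' n : ℕ, (4*‖x‖) ^ m / (m !) * ((4*‖y‖) ^ n / (n !)) :=
          Summable.tsum_le_tsum (fun n => hGnorm (m, n)) h1 h2
      _ = (4*‖x‖) ^ m / (m !) * E := tsum_mul_left
  set A : ℕ → ℝ := fun m => (4*‖x‖) ^ m / (m !) * E with hAdef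
  have hAsum : Summable A := (Real.summable_pow_div_factorial (4*‖x‖)).mul_right E
  have hAsum2 : Summable (fun m => A (m + 1 + 1)) := by
    have := (summable_nat_add_iff 2).2 hAsum
    simpa [add_assoc] using this
  have hFn2 : Summable (fun m => ‖F (m + 1 + 1)‖) :=
    Summable.of_nonneg_of_le (fun m => norm_nonneg _) (fun m => hFnorm (m+1+1)) hAsum2
  set c : ℝ := 4*‖x‖ with hcdef
  have hc0 : 0 ≤ c := by positivity
  set EX : ℝ := ∑' m : ℕ, c ^ m / (m !) with hEXdef
  have hEX0 : 0 ≤ EX := tsum_nonneg fun m => by positivity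
  have hstep : ∑' m : ℕ, A (m + 1 + 1) ≤ c^2 * E * EX := by
    have hle : ∀ m : ℕ, A (m + 1 + 1) ≤ (c^2 * E) * (c ^ m / (m !)) := by
      intro m
      rw [hAdef]
      have hfle : ((m !:ℝ)) ≤ ((m+1+1)! : ℝ) := by
        exact_mod_cast Nat.factorial_le (by omega)
      have h1 : c ^ (m+1+1) / ((m+1+1)! : ℝ) ≤ c^2 * c^m / (m !) := by
        rw [show m+1+1 = m+2 by ring, pow_add]
        have : c ^ m * c^2 / ((m+2)! : ℝ) ≤ c ^ m * c^2 / (m ! : ℝ) := by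
          apply div_le_div_of_nonneg_left (by positivity) (by positivity)
          exact_mod_cast Nat.factorial_le (by omega)
        calc c ^ m * c^2 / ((m+2)! : ℝ) ≤ c ^ m * c^2 / (m ! : ℝ) := this
          _ = c^2 * c^m / (m !) := by ring
      calc c ^ (m+1+1) / ((m+1+1)! : ℝ) * E ≤ (c^2 * c^m / (m !)) * E := by
            apply mul_le_mul_of_nonneg_right h1 hE0
        _ = (c^2 * E) * (c ^ m / (m !)) := by ring
    calc ∑' m : ℕ, A (m + 1 + 1) ≤ ∑' m : ℕ, (c^2 * E) * (c ^ m / (m !)) :=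
          Summable.tsum_le_tsum hle hAsum2 ((Real.summable_pow_div_factorial c).mul_left _)
      _ = (c^2 * E) * EX := tsum_mul_left
      _ = c^2 * E * EX := by ring
  -- bound c, E, EX by constants
  have hcle : c ≤ T * α^2 := by
    rw [hcdef, hx]
    calc 4 * (t * α^2 / 4) = t * α^2 := by ring
      _ ≤ T * α^2 := by nlinarith
  have hcT : c ≤ T := by
    have hα2 : α^2 ≤ 1 := by nlinarith
    calc c ≤ T * α^2 := hcle
      _ ≤ T * 1 := by nlinarith
      _ = T := mul_one T
  have hyle : 4*‖y‖ ≤ (β*T)^2 := by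
    rw [hy]
    nlinarith [mul_pos hβ ht0, mul_le_mul_of_nonneg_left htT hβ.le]
  have hEle : E ≤ EY := by
    refine Summable.tsum_le_tsum (fun n => ?_) (Real.summable_pow_div_factorial _)
      (Real.summable_pow_div_factorial _)
    gcongr
  have hEXle : EX ≤ ET := by
    refine Summable.tsum_le_tsum (fun m => ?_) (Real.summable_pow_div_factorial _)
      (Real.summable_pow_div_factorial _)
    gcongr
  calc ‖∑' m : ℕ, F (m + 1 + 1)‖ ≤ ∑' m : ℕ, ‖F (m + 1 + 1)‖ := norm_tsum_le_tsum_norm hFn2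
    _ ≤ ∑' m : ℕ, A (m + 1 + 1) := Summable.tsum_le_tsum (fun m => hFnorm _) hFn2 hAsum2
    _ ≤ c^2 * E * EX := hstep
    _ ≤ (T*α^2)^2 * EY * ET := by
        have h1 : c^2 ≤ (T*α^2)^2 := by
          apply pow_le_pow_left₀ hc0 hcle
        have h2 : c^2 * E ≤ (T*α^2)^2 * EY :=
          mul_le_mul h1 hEle hE0 (by positivity)
        exact mul_le_mul h2 hEXle hEX0 (by positivity)
    _ = T^2 * EY * ET * α^4 := by ring
    _ ≤ (T^2 * EY * ET + 1) * α^4 := by nlinarith [pow_pos hα 4]
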